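/- Suppose that R is a right Noetherian ring, S ∈ Den(R, 0) is a left and right denominator set with ass(S) = 0, and the ring S⁻¹R is left Noetherian (e.g. R is Noetherian). Then min(S⁻¹R) = { S⁻¹𝔭 | 𝔭 ∈ min(R,S) }; in particular min(R,S) ≠ ∅. -/

import Mathlib

/- Common framework: two-sided ideals, prime ideals, denominator sets and
   left localizations of (possibly noncommutative) rings, described
   axiomatically via their characteristic properties. -/

namespace BavulaMinPrimes

/-- A subset of a ring is a two-sided ideal. -/
def IsIdealSet {R : Type*} [Ring R] (I : Set R) : Prop :=
  (0 : R) ∈ I ∧ (∀ a ∈ I, ∀ b ∈ I, a + b ∈ I) ∧ (∀ a ∈ I, -a ∈ I) ∧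
    ∀ a ∈ I, ∀ r : R, r * a ∈ I ∧ a * r ∈ I

/-- A (two-sided) prime ideal: a proper ideal `P` such that `A * B ⊆ P`
implies `A ⊆ P` or `B ⊆ P` for all ideals `A`, `B`. -/
def IsPrimeIdealSet {R : Type*} [Ring R] (P : Set R) : Prop :=
  IsIdealSet P ∧ P ≠ Set.univ ∧
    ∀ A B : Set R, IsIdealSet A → IsIdealSet B →
      (∀ a ∈ A, ∀ b ∈ B, a * b ∈ P) → A ⊆ P ∨ B ⊆ P

/-- A completely prime ideal: the factor ring is a domain. -/
def IsCompletelyPrimeIdealSet {R : Type*} [Ring R] (P : Set R) : Prop :=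
  IsIdealSet P ∧ P ≠ Set.univ ∧ ∀ a b : R, a * b ∈ P → a ∈ P ∨ b ∈ P

/-- A minimal prime ideal of a ring. -/
def IsMinimalPrimeIdealSet {R : Type*} [Ring R] (P : Set R) : Prop :=
  IsPrimeIdealSet P ∧ ∀ P' : Set R, IsPrimeIdealSet P' → P' ⊆ P → P' = P

/-- A prime minimal over an ideal `A`. -/
def IsMinimalPrimeOver {R : Type*} [Ring R] (A P : Set R) : Prop :=
  IsPrimeIdealSet P ∧ A ⊆ P ∧
    ∀ P' : Set R, IsPrimeIdealSet P' → A ⊆ P' → P' ⊆ P → P' = P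

/-- The set `min(R)` of minimal primes of `R`. -/
def minPrimes (R : Type*) [Ring R] : Set (Set R) := { P | IsMinimalPrimeIdealSet P }

/-- The prime radical: intersection of all prime ideals. -/
def primeRadicalSet (R : Type*) [Ring R] : Set R :=
  { r : R | ∀ P : Set R, IsPrimeIdealSet P → r ∈ P }

/-- A ring is semiprime if its prime radical is zero. -/
def IsSemiprimeRing (R : Type*) [Ring R] : Prop := primeRadicalSet R = {0}

/-- A ring is prime if its zero ideal is a prime ideal. -/
def IsPrimeRing (R : Type*) [Ring R] : Prop := IsPrimeIdealSet ({0} : Set R)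

/-- A multiplicative subset: `1 ∈ S`, `0 ∉ S`, closed under multiplication. -/
def IsMulSet {R : Type*} [Ring R] (S : Set R) : Prop :=
  (1 : R) ∈ S ∧ (0 : R) ∉ S ∧ ∀ s ∈ S, ∀ t ∈ S, s * t ∈ S

/-- The left Ore condition: `S r ∩ R s ≠ ∅`. -/
def LeftOre {R : Type*} [Ring R] (S : Set R) : Prop :=
  ∀ r : R, ∀ s ∈ S, ∃ s' ∈ S, ∃ r' : R, s' * r = r' * s

/-- The right Ore condition: `r S ∩ s R ≠ ∅`. -/
def RightOre {R : Type*} [Ring R] (S : Set R) : Prop :=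
  ∀ r : R, ∀ s ∈ S, ∃ s' ∈ S, ∃ r' : R, r * s' = s * r'

/-- A left denominator set: a left Ore multiplicative set such that
`r s = 0` (with `s ∈ S`) implies `t r = 0` for some `t ∈ S`. -/
def IsLeftDenominatorSet {R : Type*} [Ring R] (S : Set R) : Prop :=
  IsMulSet S ∧ LeftOre S ∧ ∀ r : R, ∀ s ∈ S, r * s = 0 → ∃ t ∈ S, t * r = 0

/-- A right denominator set. -/
def IsRightDenominatorSet {R : Type*} [Ring R] (S : Set R) : Prop :=
  IsMulSet S ∧ RightOre S ∧ ∀ r : R, ∀ s ∈ S, s * r = 0 → ∃ t ∈ S, r * t = 0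

/-- `ass_l(S) = { r | s r = 0 for some s ∈ S }`. -/
def lAss {R : Type*} [Ring R] (S : Set R) : Set R := { r : R | ∃ s ∈ S, s * r = 0 }

/-- `f : R →+* Q` realizes `Q` as the left localization `S⁻¹R`:
elements of `S` become units, every element of `Q` is a left fraction
`(f s)⁻¹ (f r)`, and the kernel of `f` is `ass_l(S)`.  These properties
characterize `S⁻¹R` up to a unique `R`-isomorphism. -/
structure IsLeftLocalization {R Q : Type*} [Ring R] [Ring Q]
    (S : Set R) (f : R →+* Q) : Prop where
  isUnit : ∀ s ∈ S, IsUnit (f s)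
  surj : ∀ q : Q, ∃ s ∈ S, ∃ r : R, f s * q = f r
  ker : ∀ r : R, f r = 0 ↔ r ∈ lAss S

/-- `S⁻¹I = { s⁻¹ a | s ∈ S, a ∈ I }` as a subset of the localization `Q`:
`q ∈ S⁻¹I` iff `f s * q = f a` for some `s ∈ S`, `a ∈ I`. -/
def locSet {R Q : Type*} [Ring R] [Ring Q] (f : R →+* Q) (S : Set R)
    (I : Set R) : Set Q :=
  { q : Q | ∃ s ∈ S, ∃ a ∈ I, f s * q = f a }

/-- A normal element: `R n = n R`. -/
def IsNormalElement {R : Type*} [Ring R] (n : R) : Prop :=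
  (∀ r : R, ∃ r' : R, r * n = n * r') ∧ ∀ r : R, ∃ r' : R, n * r = r' * n

/-- A prime rich ring: every ideal contains a finite product of prime ideals
containing it (the empty product being the whole ring). -/
def IsPrimeRich (R : Type*) [Ring R] : Prop :=
  ∀ A : Set R, IsIdealSet A →
    ∃ (n : ℕ) (P : Fin n → Set R),
      (∀ i, IsPrimeIdealSet (P i) ∧ A ⊆ P i) ∧
      ∀ x : Fin n → R, (∀ i, x i ∈ P i) → (List.ofFn x).prod ∈ A

/-- An ideal which is finitely generated as a right `R`-module. -/
def IsFGRightIdeal {R : Type*} [Ring R] (I : Set R) : Prop :=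
  ∃ (m : ℕ) (g : Fin m → R), (∀ i, g i ∈ I) ∧
    ∀ x ∈ I, ∃ c : Fin m → R, x = ∑ i, g i * c i


/- ===== Auxiliary lemmas ===== -/

section Basics
variable {R : Type*} [Ring R] {I P : Set R}

lemma IsIdealSet.zero_mem (h : IsIdealSet I) : (0:R) ∈ I := h.1
lemma IsIdealSet.add_mem (h : IsIdealSet I) {a b : R} (ha : a ∈ I) (hb : b ∈ I) :
    a + b ∈ I := h.2.1 a ha b hb
lemma IsIdealSet.mul_mem_left (h : IsIdealSet I) (r : R) {a : R} (ha : a ∈ I) :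
    r * a ∈ I := (h.2.2.2 a ha r).1
lemma IsIdealSet.mul_mem_right (h : IsIdealSet I) (r : R) {a : R} (ha : a ∈ I) :
    a * r ∈ I := (h.2.2.2 a ha r).2
lemma IsIdealSet.sum_mem (h : IsIdealSet I) {l : List R} (hl : ∀ x ∈ l, x ∈ I) :
    l.sum ∈ I := by
  induction l with
  | nil => exact h.zero_mem
  | cons x l ih =>
    rw [List.sum_cons]
    exact h.add_mem (hl x List.mem_cons_self) (ih fun y hy => hl y (List.mem_cons_of_mem _ hy))

lemma IsIdealSet.eq_univ (h : IsIdealSet I) (h1 : (1:R) ∈ I) : I = Set.univ := by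
  ext r; simp only [Set.mem_univ, iff_true]
  simpa using h.mul_mem_left r h1

lemma IsIdealSet.one_not_mem (h : IsIdealSet I) (hne : I ≠ Set.univ) : (1:R) ∉ I :=
  fun h1 => hne (h.eq_univ h1)

/-- The two-sided ideal generated by an element, described as sums `∑ uᵢ a vᵢ`. -/
def genBy (a : R) : Set R :=
  {x | ∃ l : List (R × R), x = (l.map fun p => p.1 * a * p.2).sum}

lemma genBy_isIdealSet (a : R) : IsIdealSet (genBy a) := by
  refine ⟨⟨[], rfl⟩, ?_, ?_, ?_⟩
  · rintro x ⟨l, rfl⟩ y ⟨m, rfl⟩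
    exact ⟨l ++ m, by simp⟩
  · rintro x ⟨l, rfl⟩
    refine ⟨l.map fun p => (-p.1, p.2), ?_⟩
    rw [List.map_map, ← neg_one_mul, ← List.sum_map_mul_left]
    congr 1; apply List.map_congr_left; intro p _; simp
  · rintro x ⟨l, rfl⟩ r
    constructor
    · refine ⟨l.map fun p => (r * p.1, p.2), ?_⟩
      rw [List.map_map, ← List.sum_map_mul_left]
      congr 1; apply List.map_congr_left; intro p _; simp [mul_assoc]
    · refine ⟨l.map fun p => (p.1, p.2 * r), ?_⟩
      rw [List.map_map, ← List.sum_map_mul_right]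
      congr 1; apply List.map_congr_left; intro p _; simp [mul_assoc]

lemma self_mem_genBy (a : R) : a ∈ genBy a := ⟨[(1, 1)], by simp⟩

/-- Element criterion, forward direction. -/
lemma IsPrimeIdealSet.elem (hP : IsPrimeIdealSet P) {a b : R}
    (h : ∀ r : R, a * r * b ∈ P) : a ∈ P ∨ b ∈ P := by
  have key : ∀ x ∈ genBy a, ∀ y ∈ genBy b, x * y ∈ P := by
    rintro x ⟨l, rfl⟩ y ⟨m, rfl⟩
    rw [← List.sum_map_mul_right]
    refine hP.1.sum_mem ?_
    intro z hz
    simp only [List.mem_map] at hz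
    obtain ⟨p, _, rfl⟩ := hz
    rw [← List.sum_map_mul_left]
    refine hP.1.sum_mem ?_
    intro w hw
    simp only [List.map_map, List.mem_map] at hw
    obtain ⟨q, _, rfl⟩ := hw

    have h1 : a * (p.2 * q.1) * b ∈ P := h _
    have h2 : p.1 * (a * (p.2 * q.1) * b) * q.2 ∈ P :=
      hP.1.mul_mem_right _ (hP.1.mul_mem_left _ h1)
    have e : p.1 * a * p.2 * (q.1 * b * q.2) = p.1 * (a * (p.2 * q.1) * b) * q.2 := by
      simp only [mul_assoc]
    rw [e]; exact h2
  rcases hP.2.2 _ _ (genBy_isIdealSet a) (genBy_isIdealSet b) key with h' | h'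
  · exact Or.inl (h' (self_mem_genBy a))
  · exact Or.inr (h' (self_mem_genBy b))

/-- Element criterion, converse direction. -/
lemma isPrimeIdealSet_of_elem (hI : IsIdealSet P) (hne : P ≠ Set.univ)
    (h : ∀ a b : R, (∀ r : R, a * r * b ∈ P) → a ∈ P ∨ b ∈ P) : IsPrimeIdealSet P := by
  refine ⟨hI, hne, fun A B hA hB hAB => ?_⟩
  by_cases hAP : A ⊆ P
  · exact Or.inl hAP
  · obtain ⟨a, haA, haP⟩ := Set.not_subset.mp hAP
    refine Or.inr fun b hbB => ?_
    rcases h a b (fun r => hAB _ (hA.mul_mem_right r haA) _ hbB) with h' | h'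
    · exact absurd h' haP
    · exact h'

end Basics

section Part2
variable {R : Type*} [Ring R]

/-- The intersection of a nonempty chain of prime ideals is prime. -/
lemma chain_sInter_prime {c : Set (Set R)} (hc : IsChain (· ⊆ ·) c)
    (hne : c.Nonempty) (hp : ∀ P ∈ c, IsPrimeIdealSet P) : IsPrimeIdealSet (⋂₀ c) := by
  obtain ⟨P0, hP0⟩ := hne
  have hI : IsIdealSet (⋂₀ c) := by
    refine ⟨?_, ?_, ?_, ?_⟩
    · exact fun P hP => (hp P hP).1.zero_mem
    · intro a ha b hb P hP
      exact (hp P hP).1.add_mem (ha P hP) (hb P hP)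
    · intro a ha P hP
      exact (hp P hP).1.2.2.1 a (ha P hP)
    · intro a ha r
      exact ⟨fun P hP => (hp P hP).1.mul_mem_left r (ha P hP),
             fun P hP => (hp P hP).1.mul_mem_right r (ha P hP)⟩
  refine ⟨hI, ?_, ?_⟩
  · intro h
    refine (hp P0 hP0).2.1 (Set.eq_univ_iff_forall.mpr fun x => ?_)
    have : x ∈ ⋂₀ c := h ▸ Set.mem_univ x
    exact this P0 hP0
  · intro A B hA hB hAB
    by_cases hAsub : A ⊆ ⋂₀ c
    · exact Or.inl hAsub
    · obtain ⟨a, haA, haI⟩ := Set.not_subset.mp hAsub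
      simp only [Set.mem_sInter, not_forall] at haI
      obtain ⟨P1, hP1c, haP1⟩ := haI
      refine Or.inr fun b hbB => ?_
      intro P hPc
      have hsub : ∀ Q ∈ c, A ⊆ Q ∨ B ⊆ Q := fun Q hQ =>
        (hp Q hQ).2.2 A B hA hB fun x hx y hy => hAB x hx y hy Q hQ
      rcases hc.total hP1c hPc with h' | h'
      · -- P1 ⊆ P : use primeness of P1
        rcases hsub P1 hP1c with hh | hh
        · exact absurd (hh haA) haP1
        · exact h' (hh hbB)
      · -- P ⊆ P1 : A ⊄ P
        rcases hsub P hPc with hh | hh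
        · exact absurd (h' (hh haA)) haP1
        · exact hh hbB

/-- Every prime ideal contains a minimal prime ideal. -/
lemma exists_minimal_prime_le {p0 : Set R} (hp0 : IsPrimeIdealSet p0) :
    ∃ p : Set R, IsMinimalPrimeIdealSet p ∧ p ⊆ p0 := by
  set 𝒮 : Set (Set R) := {p | IsPrimeIdealSet p} with h𝒮
  have hz : ∀ c ⊆ 𝒮, IsChain (· ⊆ ·) c → c.Nonempty → ∃ lb ∈ 𝒮, ∀ s ∈ c, lb ⊆ s := by
    intro c hc hchain hcne
    exact ⟨⋂₀ c, chain_sInter_prime hchain hcne (fun P hP => hc hP),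
      fun s hs => Set.sInter_subset_of_mem hs⟩
  obtain ⟨m, hmx, hmmin⟩ := zorn_superset_nonempty 𝒮 hz p0 hp0
  exact ⟨m, ⟨hmmin.1, fun P' hP' hsub => Set.Subset.antisymm hsub (hmmin.2 hP' hsub)⟩, hmx⟩

/-- If all products along a list of ideals land in a prime `p`, then some member
of the list is contained in `p`. -/
lemma exists_mem_subset_of_forall_prod_mem {p : Set R} (hp : IsPrimeIdealSet p) :
    ∀ L : List (Set R), (∀ F ∈ L, IsIdealSet F) →
      (∀ x : List R, List.Forall₂ (· ∈ ·) x L → x.prod ∈ p) →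
      ∃ F ∈ L, F ⊆ p := by
  intro L
  induction L with
  | nil =>
    intro _ hprod
    have : (1:R) ∈ p := by simpa using hprod [] List.Forall₂.nil
    exact absurd this (hp.1.one_not_mem hp.2.1)
  | cons F L ih =>
    intro hid hprod
    by_cases hF : F ⊆ p
    · exact ⟨F, List.mem_cons_self, hF⟩
    cases L with
    | nil =>
      -- every a ∈ F satisfies a ∈ p
      exfalso
      refine hF fun a ha => ?_
      simpa using hprod [a] (List.Forall₂.cons ha List.Forall₂.nil)
    | cons G L' =>
      obtain ⟨a, haF, hap⟩ := Set.not_subset.mp hF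
      have hG : IsIdealSet G := hid G (by simp)
      have htail : ∀ x : List R, List.Forall₂ (· ∈ ·) x (G :: L') → x.prod ∈ p := by
        intro x hx
        obtain ⟨g, rest, hg, hrest, rfl⟩ :
            ∃ g rest, g ∈ G ∧ List.Forall₂ (· ∈ ·) rest L' ∧ x = g :: rest := by
          cases hx with | cons h1 h2 => exact ⟨_, _, h1, h2, rfl⟩
        have harb : ∀ r : R, a * r * (g :: rest).prod ∈ p := by
          intro r
          have hmem : List.Forall₂ (· ∈ ·) (a :: (r * g) :: rest) (F :: G :: L') :=
            List.Forall₂.cons haF (List.Forall₂.cons (hG.mul_mem_left r hg) hrest)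
          have := hprod _ hmem
          simpa [List.prod_cons, mul_assoc] using this
        rcases hp.elem harb with h' | h'
        · exact absurd h' hap
        · exact h'
      obtain ⟨F', hF', hsub⟩ := ih (fun F hFmem => hid F (List.mem_cons_of_mem _ hFmem)) htail
      exact ⟨F', List.mem_cons_of_mem _ hF', hsub⟩

end Part2

section Loc
variable {R Q : Type*} [Ring R] [Ring Q] {S : Set R} {f : R →+* Q}

lemma finj (hf : IsLeftLocalization S f) (hass : lAss S = ({0} : Set R)) :
    Function.Injective f := by
  intro x y hxy
  have : f (x - y) = 0 := by rw [map_sub, hxy, sub_self]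
  have := (hf.ker _).mp this
  rw [hass] at this
  simpa [sub_eq_zero] using this

lemma exists_inv (hf : IsLeftLocalization S f) {s : R} (hs : s ∈ S) :
    ∃ v : Q, f s * v = 1 ∧ v * f s = 1 := by
  obtain ⟨u, hu⟩ := hf.isUnit s hs
  exact ⟨↑u⁻¹, by rw [← hu]; exact u.mul_inv, by rw [← hu]; exact u.inv_mul⟩

lemma vpow {s : R} {v : Q} (hv : v * f s = 1) : ∀ i : ℕ, v ^ i * (f s) ^ i = 1 := by
  intro i
  induction i with
  | zero => simp
  | succ n ih =>
    rw [pow_succ, pow_succ']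
    calc v ^ n * v * (f s * (f s) ^ n) = v ^ n * (v * f s) * (f s) ^ n := by
          simp only [mul_assoc]
      _ = 1 := by rw [hv, mul_one, ih]

/-- KEY LEMMA (uses left Noetherianity of `Q`): `f a * (f s)⁻¹` lies in the left ideal
of `Q` generated by `f (a R)`. -/
lemma key_span [IsNoetherianRing Q] (a s : R) (v : Q)
    (hv1 : f s * v = 1) (hv2 : v * f s = 1) :
    f a * v ∈ Submodule.span Q (Set.range fun r : R => f (a * r)) := by
  set T : Submodule Q Q := Submodule.span Q (Set.range fun r : R => f (a * r)) with hT
  have hmono : Monotone (fun n => Submodule.span Q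
      {x | ∃ r : R, ∃ i ≤ n, x = f (a * r) * v ^ i}) := by
    intro i j hij
    apply Submodule.span_mono
    rintro x ⟨r, k, hk, rfl⟩
    exact ⟨r, k, le_trans hk hij, rfl⟩
  set N : ℕ →o Submodule Q Q :=
    ⟨fun n => Submodule.span Q {x | ∃ r : R, ∃ i ≤ n, x = f (a * r) * v ^ i}, hmono⟩ with hN
  obtain ⟨n, hn⟩ := (monotone_stabilizes_iff_noetherian.mpr inferInstance) N
  have hmem : f a * v ^ (n + 1) ∈ N (n + 1) :=
    Submodule.subset_span ⟨1, n + 1, le_refl _, by rw [mul_one]⟩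
  rw [← hn (n + 1) (Nat.le_succ n)] at hmem
  -- multiplying `N n` on the right by `(f s)^n` lands in `T`
  have hmap : ∀ x ∈ N n, x * (f s) ^ n ∈ T := by
    intro x hx
    induction hx using Submodule.span_induction with
    | mem x h =>
      obtain ⟨r, i, hi, rfl⟩ := h
      have : f (a * r) * v ^ i * (f s) ^ n = f (a * (r * s ^ (n - i))) := by
        have hsplit : (f s : Q) ^ n = (f s) ^ i * (f s) ^ (n - i) := by
          rw [← pow_add]; congr 1; omega
        rw [hsplit, mul_assoc, ← mul_assoc (v ^ i), vpow hv2 i, one_mul, ← map_pow,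
          ← map_mul, mul_assoc]
      rw [this]
      exact Submodule.subset_span ⟨r * s ^ (n - i), rfl⟩
    | zero => simpa using T.zero_mem
    | add x y hx hy ihx ihy => rw [add_mul]; exact T.add_mem ihx ihy
    | smul q x hx ih =>
      rw [smul_eq_mul, mul_assoc]
      exact T.smul_mem q ih
  have := hmap _ hmem
  have heq : f a * v ^ (n + 1) * (f s) ^ n = f a * v := by
    rw [pow_succ', mul_assoc, mul_assoc, vpow hv2 n, mul_one]
  rwa [heq] at this

/-- The crux: if `a R b ⊆ f⁻¹(P)` then `f a * (f s)⁻¹ * f b ∈ P`. -/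
lemma crux [IsNoetherianRing Q] {P : Set Q} (hP : IsIdealSet P) {a b s : R} {v : Q}
    (hv1 : f s * v = 1) (hv2 : v * f s = 1)
    (h : ∀ r : R, a * r * b ∈ f ⁻¹' P) : f a * v * f b ∈ P := by
  have hkey := key_span (f := f) a s v hv1 hv2
  have hall : ∀ x ∈ Submodule.span Q (Set.range fun r : R => f (a * r)),
      x * f b ∈ P := by
    intro x hx
    induction hx using Submodule.span_induction with
    | mem x hx =>
      obtain ⟨r, rfl⟩ := hx
      rw [← map_mul]
      have : a * r * b ∈ f ⁻¹' P := h r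
      simpa [mul_assoc] using this
    | zero => simpa using hP.zero_mem
    | add x y hx hy ihx ihy => rw [add_mul]; exact hP.add_mem ihx ihy
    | smul q x hx ih => rw [smul_eq_mul, mul_assoc]; exact hP.mul_mem_left q ih
  exact hall _ hkey

lemma IsIdealSet.preimage {P : Set Q} (hP : IsIdealSet P) :
    IsIdealSet (f ⁻¹' P) := by
  refine ⟨?_, ?_, ?_, ?_⟩
  · simp only [Set.mem_preimage, map_zero]; exact hP.zero_mem
  · intro a ha b hb; simp only [Set.mem_preimage, map_add]; exact hP.add_mem ha hb
  · intro a ha; simp only [Set.mem_preimage, map_neg]; exact hP.2.2.1 _ ha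
  · intro a ha r
    constructor
    · simp only [Set.mem_preimage, map_mul]; exact hP.mul_mem_left _ ha
    · simp only [Set.mem_preimage, map_mul]; exact hP.mul_mem_right _ ha

/-- Contraction of a prime ideal of `Q` is a prime ideal of `R`. -/
lemma contract_prime (hf : IsLeftLocalization S f) [IsNoetherianRing Q]
    {P : Set Q} (hP : IsPrimeIdealSet P) : IsPrimeIdealSet (f ⁻¹' P) := by
  refine isPrimeIdealSet_of_elem (hP.1.preimage) ?_ ?_
  · intro h
    refine hP.2.1 (hP.1.eq_univ ?_)
    have : (1:R) ∈ f ⁻¹' P := h ▸ Set.mem_univ 1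
    simpa using this
  · intro x y h
    have hQ : ∀ q : Q, f x * q * f y ∈ P := by
      intro q
      obtain ⟨s, hs, r, hsq⟩ := hf.surj q
      obtain ⟨v, hv1, hv2⟩ := exists_inv hf hs
      have hq : q = v * f r := by
        rw [← hsq, ← mul_assoc, hv2, one_mul]
      have h' : ∀ r' : R, x * r' * (r * y) ∈ f ⁻¹' P := by
        intro r'
        have : x * (r' * r) * y = x * r' * (r * y) := by simp only [mul_assoc]
        rw [← this]; exact h _
      have := crux hP.1 hv1 hv2 h'
      rw [hq]
      have e : f x * (v * f r) * f y = f x * v * f (r * y) := by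
        rw [map_mul]; simp only [mul_assoc]
      rw [e]; exact this
    rcases hP.elem hQ with h' | h'
    · exact Or.inl h'
    · exact Or.inr h'

lemma contract_disjoint (hf : IsLeftLocalization S f)
    {P : Set Q} (hP : IsPrimeIdealSet P) : f ⁻¹' P ∩ S = ∅ := by
  by_contra h
  obtain ⟨s, hsP, hsS⟩ := Set.nonempty_iff_ne_empty.mpr h
  obtain ⟨v, hv1, hv2⟩ := exists_inv hf hsS
  have : (1:Q) ∈ P := hv1 ▸ hP.1.mul_mem_right v hsP
  exact hP.2.1 (hP.1.eq_univ this)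

lemma loc_contract (hf : IsLeftLocalization S f)
    {P : Set Q} (hP : IsIdealSet P) : locSet f S (f ⁻¹' P) = P := by
  ext q
  constructor
  · rintro ⟨s, hs, a, ha, heq⟩
    obtain ⟨v, hv1, hv2⟩ := exists_inv hf hs
    have : q = v * f a := by rw [← heq, ← mul_assoc, hv2, one_mul]
    rw [this]
    exact hP.mul_mem_left v ha
  · intro hq
    obtain ⟨s, hs, r, heq⟩ := hf.surj q
    exact ⟨s, hs, r, by simpa [← heq] using hP.mul_mem_left (f s) hq, heq⟩

lemma locSet_mono {I J : Set R} (h : I ⊆ J) : locSet f S I ⊆ locSet f S J := by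
  rintro q ⟨s, hs, a, ha, heq⟩
  exact ⟨s, hs, a, h ha, heq⟩

end Loc

section Rich
variable {Q : Type*} [Ring Q]

lemma forall₂_append_split {α β : Type*} {r : α → β → Prop} :
    ∀ {l₁ l₂ : List β} {x : List α}, List.Forall₂ r x (l₁ ++ l₂) →
      ∃ x₁ x₂, x = x₁ ++ x₂ ∧ List.Forall₂ r x₁ l₁ ∧ List.Forall₂ r x₂ l₂ := by
  intro l₁
  induction l₁ with
  | nil => exact fun {l₂ x} h => ⟨[], x, rfl, List.Forall₂.nil, h⟩
  | cons b l₁ ih =>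
    intro l₂ x h
    obtain ⟨a, x', hab, htail, rfl⟩ :
        ∃ a x', r a b ∧ List.Forall₂ r x' (l₁ ++ l₂) ∧ x = a :: x' := by
      cases h with | cons h1 h2 => exact ⟨_, _, h1, h2, rfl⟩
    obtain ⟨x₁, x₂, rfl, h1, h2⟩ := ih htail
    exact ⟨a :: x₁, x₂, rfl, List.Forall₂.cons hab h1, h2⟩

/-- "Prime rich at `A`": `A` contains a finite product of primes containing it. -/
def RichAt (A : Set Q) : Prop :=
  ∃ L : List (Set Q), (∀ P ∈ L, IsPrimeIdealSet P ∧ A ⊆ P) ∧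
    ∀ x : List Q, List.Forall₂ (· ∈ ·) x L → x.prod ∈ A

def subOf (A : Set Q) (hA : IsIdealSet A) : Submodule Q Q where
  carrier := A
  add_mem' := fun ha hb => hA.add_mem ha hb
  zero_mem' := hA.zero_mem
  smul_mem' := fun q a ha => by simpa [smul_eq_mul] using hA.mul_mem_left q ha

lemma richAt_all [IsNoetherianRing Q] (A : Set Q) (hA : IsIdealSet A) : RichAt A := by
  by_contra hnr
  set 𝒮 : Set (Submodule Q Q) :=
    {N | IsIdealSet (N : Set Q) ∧ ¬ RichAt (N : Set Q)} with h𝒮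
  have hne : 𝒮.Nonempty := ⟨subOf A hA, hA, hnr⟩
  obtain ⟨M, hM𝒮, hMmax⟩ := (set_has_maximal_iff_noetherian.mpr inferInstance) 𝒮 hne
  set B : Set Q := (M : Set Q) with hBdef
  obtain ⟨hB, hBnr⟩ := hM𝒮
  -- case 1 : 1 ∈ B
  by_cases h1 : (1:Q) ∈ B
  · refine hBnr ⟨[], by simp, ?_⟩
    intro x hx
    rw [List.forall₂_nil_right_iff.mp hx]
    simpa [hBdef] using h1
  -- case 2 : B prime
  by_cases hprime : IsPrimeIdealSet B
  · refine hBnr ⟨[B], (by simp [hprime]; exact subset_rfl), ?_⟩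
    intro x hx
    obtain ⟨a, x', ha, htail, rfl⟩ :
        ∃ a x', a ∈ B ∧ List.Forall₂ (· ∈ ·) x' ([] : List (Set Q)) ∧ x = a :: x' := by
      cases hx with | cons hh1 hh2 => exact ⟨_, _, hh1, hh2, rfl⟩
    rw [List.forall₂_nil_right_iff.mp htail]
    simpa [hBdef] using ha
  -- case 3 : B not prime; get two bigger ideals
  have hBne : B ≠ Set.univ := fun h => h1 (h ▸ Set.mem_univ 1)
  have : ¬ (∀ C D : Set Q, IsIdealSet C → IsIdealSet D →
      (∀ c ∈ C, ∀ d ∈ D, c * d ∈ B) → C ⊆ B ∨ D ⊆ B) := by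
    intro h
    exact hprime ⟨hB, hBne, h⟩
  push_neg at this
  obtain ⟨C, D, hC, hD, hCD, hCB, hDB⟩ := this
  -- enlarge
  have enlarge : ∀ E : Set Q, IsIdealSet E → ¬ E ⊆ B →
      RichAt {x | ∃ b ∈ B, ∃ e ∈ E, x = b + e} := by
    intro E hE hEB
    set E' : Set Q := {x | ∃ b ∈ B, ∃ e ∈ E, x = b + e} with hE'def
    have hE' : IsIdealSet E' := by
      refine ⟨⟨0, hB.zero_mem, 0, hE.zero_mem, by simp⟩, ?_, ?_, ?_⟩
      · rintro _ ⟨b, hb, e, he, rfl⟩ _ ⟨b', hb', e', he', rfl⟩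
        exact ⟨b + b', hB.add_mem hb hb', e + e', hE.add_mem he he', by abel⟩
      · rintro _ ⟨b, hb, e, he, rfl⟩
        exact ⟨-b, hB.2.2.1 _ hb, -e, hE.2.2.1 _ he, by abel⟩
      · rintro _ ⟨b, hb, e, he, rfl⟩ r
        constructor
        · exact ⟨r * b, hB.mul_mem_left r hb, r * e, hE.mul_mem_left r he, by noncomm_ring⟩
        · exact ⟨b * r, hB.mul_mem_right r hb, e * r, hE.mul_mem_right r he, by noncomm_ring⟩
    have hBE' : B ⊆ E' := fun b hb => ⟨b, hb, 0, hE.zero_mem, by simp⟩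
    obtain ⟨e₀, he₀E, he₀B⟩ := Set.not_subset.mp hEB
    have he₀E' : e₀ ∈ E' := ⟨0, hB.zero_mem, e₀, he₀E, by simp⟩
    by_contra hE'nr
    have hmem𝒮 : subOf E' hE' ∈ 𝒮 := ⟨hE', hE'nr⟩
    have hlt : M < subOf E' hE' := by
      refine lt_of_le_of_ne (fun x hx => hBE' hx) ?_
      intro heq
      have : e₀ ∈ M := by rw [heq]; exact he₀E'
      exact he₀B this
    exact hMmax _ hmem𝒮 hlt
  have hC' := enlarge C hC hCB
  have hD' := enlarge D hD hDB
  obtain ⟨L₁, hL₁, hp₁⟩ := hC'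
  obtain ⟨L₂, hL₂, hp₂⟩ := hD'
  refine hBnr ⟨L₁ ++ L₂, ?_, ?_⟩
  · intro P hP
    rcases List.mem_append.mp hP with h | h
    · exact ⟨(hL₁ P h).1, fun b hb => (hL₁ P h).2 ⟨b, hb, 0, hC.zero_mem, by simp⟩⟩
    · exact ⟨(hL₂ P h).1, fun b hb => (hL₂ P h).2 ⟨b, hb, 0, hD.zero_mem, by simp⟩⟩
  · intro x hx
    obtain ⟨x₁, x₂, rfl, h1, h2⟩ := forall₂_append_split hx
    rw [List.prod_append]
    obtain ⟨b, hb, c, hc, he⟩ := hp₁ x₁ h1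
    obtain ⟨b', hb', d, hd, he'⟩ := hp₂ x₂ h2
    rw [he, he']
    have : (b + c) * (b' + d) = b * (b' + d) + (c * b' + c * d) := by noncomm_ring
    rw [this]
    exact hB.add_mem (hB.mul_mem_right _ hb)
      (hB.add_mem (hB.mul_mem_left _ hb') (hCD c hc d hd))

end Rich

/-- If `R` is right Noetherian, `S ∈ Den(R, 0)` and `S⁻¹R` is
left Noetherian, then `min(S⁻¹R) = { S⁻¹𝔭 | 𝔭 ∈ min(R,S) }`; in particular
`min(R,S) ≠ ∅`. -/
theorem statement5 {R Q : Type*} [Ring R] [Ring Q]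
    [IsNoetherianRing Rᵐᵒᵖ]
    {S : Set R} (hSl : IsLeftDenominatorSet S) (hSr : IsRightDenominatorSet S)
    (hass : lAss S = ({0} : Set R))
    (f : R →+* Q) (hf : IsLeftLocalization S f)
    [IsNoetherianRing Q] :
    minPrimes Q = locSet f S '' {p : Set R | IsMinimalPrimeIdealSet p ∧ p ∩ S = ∅} ∧
    {p : Set R | IsMinimalPrimeIdealSet p ∧ p ∩ S = ∅}.Nonempty := by
  have hinj : Function.Injective f := finj hf hass
  have hQ10 : (1:Q) ≠ 0 := by
    intro h
    have h1 : f 1 = 0 := by rw [map_one, h]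
    have := (hf.ker 1).mp h1
    rw [hass] at this
    have h10 : (1:R) = 0 := this
    exact hSl.1.2.1 (h10 ▸ hSl.1.1)
  have hzero : IsIdealSet ({0} : Set Q) := by
    refine ⟨rfl, ?_, ?_, ?_⟩ <;> simp +contextual [Set.mem_singleton_iff]
  obtain ⟨L, hL, hprod⟩ := richAt_all ({0} : Set Q) hzero
  have hLne : L ≠ [] := by
    intro h
    have := hprod [] (h ▸ List.Forall₂.nil)
    simp at this
    exact hQ10 this
  -- all products along the contracted list vanish in R
  have hprodR : ∀ y : List R, List.Forall₂ (· ∈ ·) y (L.map (f ⁻¹' ·)) →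
      y.prod = 0 := by
    intro y hy
    have hy' : List.Forall₂ (fun a P => f a ∈ P) y L := by
      rw [List.forall₂_map_right_iff] at hy
      exact hy
    have hmap : List.Forall₂ (· ∈ ·) (y.map f) L := by
      rw [List.forall₂_map_left_iff]
      exact hy'
    have := hprod _ hmap
    rw [← map_list_prod f y] at this
    have h0 : f y.prod = f 0 := by rw [map_zero]; exact this
    exact hinj h0
  -- every prime of Q contains some member of L
  have hfactorQ : ∀ {P : Set Q}, IsPrimeIdealSet P → ∃ P0 ∈ L, P0 ⊆ P := by
    intro P hP
    refine exists_mem_subset_of_forall_prod_mem hP L (fun F hF => (hL F hF).1.1) ?_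
    intro x hx
    have := hprod x hx
    have h0 : x.prod = 0 := this
    rw [h0]; exact hP.1.zero_mem
  -- every prime of R contains the contraction of some member of L
  have hfactorR : ∀ {p : Set R}, IsPrimeIdealSet p → ∃ P0 ∈ L, f ⁻¹' P0 ⊆ p := by
    intro p hp
    have hid : ∀ F ∈ L.map (f ⁻¹' ·), IsIdealSet F := by
      intro F hF
      obtain ⟨P0, hP0, rfl⟩ := List.mem_map.mp hF
      exact (hL P0 hP0).1.1.preimage
    obtain ⟨F, hF, hsub⟩ := exists_mem_subset_of_forall_prod_mem hp (L.map (f ⁻¹' ·)) hid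
      (fun y hy => by rw [hprodR y hy]; exact hp.1.zero_mem)
    obtain ⟨P0, hP0, rfl⟩ := List.mem_map.mp hF
    exact ⟨P0, hP0, hsub⟩
  constructor
  · -- the set equality
    ext P
    constructor
    · -- min(Q) ⊆ image
      intro hPmin
      have hPprime : IsPrimeIdealSet P := hPmin.1
      obtain ⟨P0, hP0L, hP0sub⟩ := hfactorQ hPprime
      have hP0P : P0 = P := hPmin.2 P0 (hL P0 hP0L).1 hP0sub
      subst hP0P
      refine ⟨f ⁻¹' P0, ⟨⟨contract_prime hf hPprime, ?_⟩, contract_disjoint hf hPprime⟩,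
        loc_contract hf hPprime.1⟩
      -- minimality of the contraction
      intro q' hq' hsub
      obtain ⟨P1, hP1L, hP1sub⟩ := hfactorR hq'
      have hP1P0 : P1 ⊆ P0 := by
        have h1 : locSet f S (f ⁻¹' P1) ⊆ locSet f S (f ⁻¹' P0) :=
          locSet_mono (hP1sub.trans hsub)
        rwa [loc_contract hf (hL P1 hP1L).1.1, loc_contract hf hPprime.1] at h1
      have : P1 = P0 := hPmin.2 P1 (hL P1 hP1L).1 hP1P0
      refine Set.Subset.antisymm hsub ?_
      rw [← this] at *
      exact hP1sub
    · -- image ⊆ min(Q)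
      rintro ⟨p, ⟨hpmin, hpdisj⟩, rfl⟩
      obtain ⟨P1, hP1L, hP1sub⟩ := hfactorR hpmin.1
      have hP1prime : IsPrimeIdealSet P1 := (hL P1 hP1L).1
      have hcp : f ⁻¹' P1 = p := hpmin.2 _ (contract_prime hf hP1prime) hP1sub
      have hloc : locSet f S p = P1 := by
        rw [← hcp, loc_contract hf hP1prime.1]
      rw [hloc]
      refine ⟨hP1prime, ?_⟩
      intro P' hP' hsub
      have hsubc : f ⁻¹' P' ⊆ f ⁻¹' P1 := fun x hx => hsub hx
      have h1 : f ⁻¹' P' = p := hpmin.2 _ (contract_prime hf hP') (hcp ▸ hsubc)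
      calc P' = locSet f S (f ⁻¹' P') := (loc_contract hf hP'.1).symm
        _ = locSet f S (f ⁻¹' P1) := by rw [h1, hcp]
        _ = P1 := loc_contract hf hP1prime.1
  · -- nonemptiness
    obtain ⟨P0, hP0L⟩ : ∃ P0, P0 ∈ L := by
      cases L with
      | nil => exact absurd rfl hLne
      | cons a L => exact ⟨a, List.mem_cons_self⟩
    have hP0prime : IsPrimeIdealSet P0 := (hL P0 hP0L).1
    obtain ⟨q, hqmin, hqsub⟩ := exists_minimal_prime_le (contract_prime hf hP0prime)
    refine ⟨q, hqmin, ?_⟩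
    have hdisj := contract_disjoint hf hP0prime
    apply Set.eq_empty_of_subset_empty
    intro x hx
    exact hdisj ▸ (Set.mem_inter (hqsub hx.1) hx.2)


end BavulaMinPrimes
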